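/- arXiv:math/9606212 — 2 statements merged into one kernel-verified Lean document; each statement's English description precedes it below -/
import Mathlib

section
/- Let 0 → B →^i A →^j D → 0 be an extension of Banach algebras where B has a right bounded approximate identity (e_α). Then for every n, the induced map ĩ_n : CC_n(B) → CC_n(A) between cyclic quotient spaces is injective with closed range. Specifically, for every continuous trace-type functional f ∈ CC_n(B)* (i.e. f ∈ (B^⊗̂(n+1))* vanishing on Im(id − t_n)), the functional g_f(a_0 ⊗ ⋯ ⊗ a_n) = lim_{α→U} f(i^{-1}(a_0 i(e_α)) ⊗ ⋯ ⊗ i^{-1}(a_n i(e_α))) is a bounded functional on A^⊗̂(n+1) vanishing on Im(id − t_n), and (i^⊗̂(n+1))* g_f = f. -/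
open NormedSpace Filter

noncomputable section

/-- A Banach space `T` together with a bounded `n`-linear map `φ : Aⁿ → T` is *the*
`n`-fold projective tensor power `A^⊗̂n`. -/
structure IsProjectiveTensorPower
    (A : Type*) [NormedAddCommGroup A] [NormedSpace ℝ A]
    (n : ℕ)
    (T : Type*) [NormedAddCommGroup T] [NormedSpace ℝ T] [CompleteSpace T]
    (φ : ContinuousMultilinearMap ℝ (fun _ : Fin n => A) T) : Prop where
  dense : (Submodule.span ℝ (Set.range ⇑φ)).topologicalClosure = ⊤
  lift : ∀ (W : Type) [NormedAddCommGroup W] [NormedSpace ℝ W] [CompleteSpace W]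
      (m : ContinuousMultilinearMap ℝ (fun _ : Fin n => A) W),
      ∃ g : T →L[ℝ] W, (∀ v, g (φ v) = m v) ∧ ‖g‖ = ‖m‖

/-- The cyclic permutation of an elementary tensor (without the sign). -/
def cyclicShift {A : Type*} {n : ℕ} (v : Fin (n + 1) → A) : Fin (n + 1) → A :=
  fun k => v (k - 1)

set_option maxHeartbeats 2000000 in
/-- Lemma 3.7: For an extension 0 → B →^i A →^j D → 0 of Banach
algebras where B has a right bounded approximate identity (e_α), the induced map
ĩ_n : CC_n(B) → CC_n(A) is injective with closed range; moreover every
f ∈ (B^⊗̂(n+1))* vanishing on Im(id − t_n) extends to a bounded functional g on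
A^⊗̂(n+1) vanishing on Im(id − t_n), given on elementary tensors by the ultrafilter
limit g(a₀ ⊗ ⋯ ⊗ a_n) = lim_{α→U} f(i⁻¹(a₀ i(e_α)) ⊗ ⋯ ⊗ i⁻¹(a_n i(e_α))), and
satisfying (i^⊗̂(n+1))* g = f. -/
theorem cyclic_quotient_map_injective_closed_range
    {B A D : Type*}
    [NormedRing B] [NormedAlgebra ℝ B] [CompleteSpace B]
    [NormedRing A] [NormedAlgebra ℝ A] [CompleteSpace A]
    [NormedRing D] [NormedAlgebra ℝ D] [CompleteSpace D]
    (i : B →ₐ[ℝ] A) (j : A →ₐ[ℝ] D)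
    (hi_cont : Continuous i) (hj_cont : Continuous j)
    (hi : Function.Injective i) (hj : Function.Surjective j)
    (hexact : ∀ a : A, j a = 0 ↔ ∃ b, i b = a)
    -- the right bounded approximate identity and an ultrafilter refining the net filter
    {ι : Type} (l : Filter ι) [l.NeBot] (e : ι → B)
    (hbdd : ∃ C : ℝ, ∀ α, ‖e α‖ ≤ C)
    (hbai : ∀ b : B, Tendsto (fun α => b * e α) l (nhds b))
    (U : Ultrafilter ι) (hU : l ≤ ↑U)
    (n : ℕ)
    {TB TA : Type*}
    [NormedAddCommGroup TB] [NormedSpace ℝ TB] [CompleteSpace TB]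
    [NormedAddCommGroup TA] [NormedSpace ℝ TA] [CompleteSpace TA]
    (φB : ContinuousMultilinearMap ℝ (fun _ : Fin (n + 1) => B) TB)
    (hTB : IsProjectiveTensorPower B (n + 1) TB φB)
    (φA : ContinuousMultilinearMap ℝ (fun _ : Fin (n + 1) => A) TA)
    (hTA : IsProjectiveTensorPower A (n + 1) TA φA)
    -- the signed cyclic operators
    (tB : TB →L[ℝ] TB)
    (htB : ∀ v : Fin (n + 1) → B, tB (φB v) = ((-1 : ℝ) ^ n) • φB (cyclicShift v))
    (tA : TA →L[ℝ] TA)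
    (htA : ∀ v : Fin (n + 1) → A, tA (φA v) = ((-1 : ℝ) ^ n) • φA (cyclicShift v))
    -- the map i^⊗̂(n+1)
    (I : TB →L[ℝ] TA) (hI : ∀ v : Fin (n + 1) → B, I (φB v) = φA fun k => i (v k))
    -- the induced map ĩ_n between the cyclic quotient spaces
    (Itil : (TB ⧸ (LinearMap.range ((ContinuousLinearMap.id ℝ TB - tB : TB →L[ℝ] TB) : TB →ₗ[ℝ] TB)).topologicalClosure) →ₗ[ℝ]
            (TA ⧸ (LinearMap.range ((ContinuousLinearMap.id ℝ TA - tA : TA →L[ℝ] TA) : TA →ₗ[ℝ] TA)).topologicalClosure))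
    (hItil : ∀ x : TB, Itil (Submodule.Quotient.mk x) = Submodule.Quotient.mk (I x)) :
    Function.Injective Itil ∧ IsClosed (Set.range Itil) ∧
    ∀ f : StrongDual ℝ TB, (∀ x : TB, f (x - tB x) = 0) →
      ∃ g : StrongDual ℝ TA,
        (∀ x : TA, g (x - tA x) = 0) ∧
        (∀ x : TB, g (I x) = f x) ∧
        (∀ v : Fin (n + 1) → A,
          Tendsto
            (fun α => f (φB fun k => Function.invFun i (v k * i (e α))))
            (U : Filter ι) (nhds (g (φA v)))) := by
  classical
  -- continuous linear versions of i and j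
  set iL : B →L[ℝ] A := ⟨i.toLinearMap, hi_cont⟩ with hiL
  set jL : A →L[ℝ] D := ⟨j.toLinearMap, hj_cont⟩ with hjL
  -- the ultrafilter equals the net filter
  have hl_eq : (l : Filter ι) = (U : Filter ι) := U.unique hU
  -- bounded inverse for i
  have hjker_closed : IsClosed ((LinearMap.ker (jL : A →ₗ[ℝ] D) : Submodule ℝ A) : Set A) :=
    ContinuousLinearMap.isClosed_ker jL
  haveI : CompleteSpace (LinearMap.ker (jL : A →ₗ[ℝ] D)) := hjker_closed.completeSpace_coe
  have hmemN : ∀ b : B, iL b ∈ LinearMap.ker (jL : A →ₗ[ℝ] D) := by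
    intro b
    have : j (i b) = 0 := (hexact (i b)).mpr ⟨b, rfl⟩
    exact this
  set iT : B →L[ℝ] (LinearMap.ker (jL : A →ₗ[ℝ] D)) := iL.codRestrict _ hmemN with hiT
  have hiTsurj : Function.Surjective iT := by
    rintro ⟨a, ha⟩
    obtain ⟨b, hb⟩ := (hexact a).mp (by simpa [LinearMap.mem_ker, hjL] using ha)
    exact ⟨b, Subtype.ext hb⟩
  obtain ⟨K, hKpos, hK⟩ := iT.exists_preimage_norm_le hiTsurj
  have hKb : ∀ b : B, ‖b‖ ≤ K * ‖i b‖ := by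
    intro b
    obtain ⟨b', hb', hb'n⟩ := hK (iT b)
    have hbb : b' = b := by
      apply hi
      have := congrArg Subtype.val hb'
      exact this
    subst hbb
    exact hb'n
  -- constants
  obtain ⟨C0, hC0⟩ := hbdd
  set C : ℝ := max C0 0 with hC
  have hCnn : 0 ≤ C := le_max_right _ _
  have hCb : ∀ α, ‖e α‖ ≤ C := fun α => le_trans (hC0 α) (le_max_left _ _)
  set Ci : ℝ := ‖iL‖ with hCi
  set M : ℝ := K * (Ci * C) with hM
  have hM0 : 0 ≤ M := mul_nonneg hKpos.le (mul_nonneg (norm_nonneg _) hCnn)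
  -- the maps ψ α : A → B, a ↦ i⁻¹ (a * i (e α))
  have hmul_mem : ∀ (a : A) (b2 : B), ∃ b', i b' = a * i b2 := by
    intro a b2
    refine (hexact _).mp ?_
    rw [map_mul, show j (i b2) = 0 from (hexact _).mpr ⟨b2, rfl⟩, mul_zero]
  set ψ : ι → A → B := fun α a => Function.invFun (⇑i) (a * i (e α)) with hψdef
  have hψ : ∀ α a, i (ψ α a) = a * i (e α) := fun α a =>
    Function.invFun_eq (hmul_mem a (e α))
  have hψ_add : ∀ α a a', ψ α (a + a') = ψ α a + ψ α a' := by
    intro α a a'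
    apply hi
    rw [hψ, map_add, hψ, hψ, add_mul]
  have hψ_smul : ∀ α (r : ℝ) a, ψ α (r • a) = r • ψ α a := by
    intro α r a
    apply hi
    rw [hψ, map_smul, hψ, smul_mul_assoc]
  have hψ_bound : ∀ α a, ‖ψ α a‖ ≤ M * ‖a‖ := by
    intro α a
    calc ‖ψ α a‖ ≤ K * ‖i (ψ α a)‖ := hKb _
      _ = K * ‖a * i (e α)‖ := by rw [hψ]
      _ ≤ K * (‖a‖ * ‖i (e α)‖) := by
          exact mul_le_mul_of_nonneg_left (norm_mul_le _ _) hKpos.le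
      _ ≤ K * (‖a‖ * (Ci * ‖e α‖)) := by
          refine mul_le_mul_of_nonneg_left (mul_le_mul_of_nonneg_left ?_ (norm_nonneg _)) hKpos.le
          exact iL.le_opNorm (e α)
      _ ≤ K * (‖a‖ * (Ci * C)) := by
          refine mul_le_mul_of_nonneg_left (mul_le_mul_of_nonneg_left ?_ (norm_nonneg _)) hKpos.le
          exact mul_le_mul_of_nonneg_left (hCb α) (norm_nonneg _)
      _ = M * ‖a‖ := by rw [hM]; ring
  have hψi : ∀ α (b : B), ψ α (i b) = b * e α := by
    intro α b
    apply hi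
    rw [hψ, map_mul]
  -- global constant
  set M' : ℝ := ‖φB‖ * M ^ (n + 1) with hM'
  have hM'0 : 0 ≤ M' := mul_nonneg (norm_nonneg _) (pow_nonneg hM0 _)
  -- dense spans
  have hdenseB : Dense ((Submodule.span ℝ (Set.range ⇑φB) : Submodule ℝ TB) : Set TB) :=
    Submodule.dense_iff_topologicalClosure_eq_top.mpr hTB.dense
  have hdenseA : Dense ((Submodule.span ℝ (Set.range ⇑φA) : Submodule ℝ TA) : Set TA) :=
    Submodule.dense_iff_topologicalClosure_eq_top.mpr hTA.dense
  -- THE KEY EXTENSION LEMMA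
  have key : ∀ f : StrongDual ℝ TB, (∀ x : TB, f (x - tB x) = 0) →
      ∃ g : StrongDual ℝ TA, ‖g‖ ≤ ‖f‖ * M' ∧ (∀ x : TA, g (x - tA x) = 0) ∧
        (∀ x : TB, g (I x) = f x) ∧
        (∀ v : Fin (n + 1) → A,
          Tendsto (fun α => f (φB fun k => Function.invFun i (v k * i (e α))))
            (U : Filter ι) (nhds (g (φA v)))) := by
    intro f hf
    set F : ι → (Fin (n + 1) → A) → ℝ := fun α v => f (φB fun k => ψ α (v k)) with hF
    have hFbound : ∀ α v, |F α v| ≤ (‖f‖ * M') * ∏ k, ‖v k‖ := by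
      intro α v
      have h1 : |F α v| ≤ ‖f‖ * ‖φB (fun k => ψ α (v k))‖ := f.le_opNorm _
      have h2 : ‖φB (fun k => ψ α (v k))‖ ≤ ‖φB‖ * ∏ k, ‖ψ α (v k)‖ := φB.le_opNorm _
      have h3 : (∏ k, ‖ψ α (v k)‖) ≤ ∏ k, (M * ‖v k‖) := by
        refine Finset.prod_le_prod (fun k _ => norm_nonneg _) (fun k _ => hψ_bound α (v k))
      have h4 : (∏ k : Fin (n + 1), (M * ‖v k‖)) = M ^ (n + 1) * ∏ k, ‖v k‖ := by
        rw [Finset.prod_mul_distrib, Finset.prod_const, Finset.card_univ, Fintype.card_fin]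
      calc |F α v| ≤ ‖f‖ * ‖φB (fun k => ψ α (v k))‖ := h1
        _ ≤ ‖f‖ * (‖φB‖ * ∏ k, ‖ψ α (v k)‖) :=
            mul_le_mul_of_nonneg_left h2 (norm_nonneg _)
        _ ≤ ‖f‖ * (‖φB‖ * (M ^ (n + 1) * ∏ k, ‖v k‖)) := by
            refine mul_le_mul_of_nonneg_left
              (mul_le_mul_of_nonneg_left ?_ (norm_nonneg _)) (norm_nonneg _)
            rw [← h4]; exact h3
        _ = (‖f‖ * M') * ∏ k, ‖v k‖ := by rw [hM']; ring
    have hlim : ∀ v : Fin (n + 1) → A,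
        ∃ x : ℝ, Tendsto (fun α => F α v) (U : Filter ι) (nhds x) := by
      intro v
      set R : ℝ := (‖f‖ * M') * ∏ k, ‖v k‖ with hR
      have hmem : ∀ α, F α v ∈ Set.Icc (-R) R := by
        intro α
        have := hFbound α v
        exact ⟨neg_le_of_abs_le this, le_of_abs_le this⟩
      obtain ⟨x, -, hx⟩ := (isCompact_Icc (a := -R) (b := R)).ultrafilter_le_nhds
        (U.map fun α => F α v) (by
          rw [Ultrafilter.coe_map]
          exact le_principal_iff.mpr (mem_map.mpr (univ_mem' hmem)))
      exact ⟨x, by rwa [Ultrafilter.coe_map] at hx⟩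
    choose mfun hmf using hlim
    have hmbound : ∀ v, |mfun v| ≤ (‖f‖ * M') * ∏ k, ‖v k‖ := by
      intro v
      exact le_of_tendsto ((hmf v).abs) (Eventually.of_forall fun α => hFbound α v)
    -- multilinearity of mfun
    have hFeq_update : ∀ α (v : Fin (n + 1) → A) (k : Fin (n + 1)) (x : A)
        [DecidableEq (Fin (n + 1))],
        (fun kk => ψ α (Function.update v k x kk))
          = Function.update (fun kk => ψ α (v kk)) k (ψ α x) := by
      intro α v k x _
      funext kk
      exact Function.apply_update (fun _ a => ψ α a) v k x kk
    set mlin : MultilinearMap ℝ (fun _ : Fin (n + 1) => A) ℝ :=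
      { toFun := mfun
        map_update_add' := by
          intro dec v k x y
          refine tendsto_nhds_unique (hmf _) ?_
          have h1 := (hmf (Function.update v k x)).add (hmf (Function.update v k y))
          refine Tendsto.congr (fun α => ?_) h1
          show F α (Function.update v k x) + F α (Function.update v k y)
              = F α (Function.update v k (x + y))
          simp only [hF]
          rw [hFeq_update, hFeq_update, hFeq_update, hψ_add,
            φB.map_update_add, map_add]
        map_update_smul' := by
          intro dec v k r x
          refine tendsto_nhds_unique (hmf _) ?_
          have h1 := (hmf (Function.update v k x)).const_mul r
          refine Tendsto.congr (fun α => ?_) h1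
          show r * F α (Function.update v k x) = F α (Function.update v k (r • x))
          simp only [hF]
          rw [hFeq_update, hFeq_update, hψ_smul,
            φB.map_update_smul, map_smul, smul_eq_mul] } with hmlin
    set mC : ContinuousMultilinearMap ℝ (fun _ : Fin (n + 1) => A) ℝ :=
      mlin.mkContinuous (‖f‖ * M') (fun v => by
        rw [Real.norm_eq_abs]; exact hmbound v) with hmC
    obtain ⟨g, hg, hgn⟩ := hTA.lift ℝ mC
    have hgv : ∀ v, g (φA v) = mfun v := fun v => hg v
    have hgnorm : ‖g‖ ≤ ‖f‖ * M' := by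
      rw [hgn]
      exact mlin.mkContinuous_norm_le (mul_nonneg (norm_nonneg _) hM'0) _
    -- cyclic invariance of mfun
    have hcyc : ∀ v, mfun v = (-1 : ℝ) ^ n * mfun (cyclicShift v) := by
      intro v
      refine tendsto_nhds_unique (hmf v) ?_
      have h1 := (hmf (cyclicShift v)).const_mul ((-1 : ℝ) ^ n)
      refine Tendsto.congr (fun α => ?_) h1
      show (-1 : ℝ) ^ n * F α (cyclicShift v) = F α v
      have h0 := hf (φB fun k => ψ α (v k))
      have h2 : f (φB fun k => ψ α (v k)) = f (tB (φB fun k => ψ α (v k))) := by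
        have := h0
        rw [map_sub] at this
        linarith
      have h3 : F α v = (-1 : ℝ) ^ n * f (φB (cyclicShift fun k => ψ α (v k))) := by
        simp only [hF]
        rw [h2, htB, map_smul, smul_eq_mul]
      rw [h3]
      rfl
    -- g vanishes on the range of (id - tA)
    have hvanA : ∀ x : TA, g (x - tA x) = 0 := by
      have hext : g.comp ((ContinuousLinearMap.id ℝ TA) - tA) = 0 := by
        apply ContinuousLinearMap.ext_on hdenseA
        rintro _ ⟨v, rfl⟩
        simp only [ContinuousLinearMap.comp_apply, ContinuousLinearMap.sub_apply,
          ContinuousLinearMap.id_apply, map_sub, ContinuousLinearMap.zero_apply]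
        rw [htA, map_smul, smul_eq_mul, hgv, hgv, ← hcyc v, sub_self]
      intro x
      have := DFunLike.congr_fun hext x
      simpa [ContinuousLinearMap.comp_apply, ContinuousLinearMap.sub_apply] using this
    -- g ∘ I = f
    have hIg : ∀ x : TB, g (I x) = f x := by
      have hext : g.comp I = f := by
        apply ContinuousLinearMap.ext_on hdenseB
        rintro _ ⟨v, rfl⟩
        have h1 : g (I (φB v)) = mfun fun k => i (v k) := by rw [hI, hgv]
        have h2 : Tendsto (fun α => F α fun k => i (v k)) (U : Filter ι)
            (nhds (f (φB v))) := by
          have hcont : Continuous fun w : Fin (n + 1) → B => f (φB w) :=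
            f.continuous.comp φB.cont
          have htd : Tendsto (fun α => (fun k => v k * e α)) (U : Filter ι) (nhds v) := by
            rw [← hl_eq]
            exact tendsto_pi_nhds.mpr fun k => hbai (v k)
          have := (hcont.tendsto v).comp htd
          refine Tendsto.congr (fun α => ?_) this
          show f (φB fun k => v k * e α) = F α fun k => i (v k)
          have harg : (fun k => v k * e α) = fun k => ψ α (i (v k)) := by
            funext k; rw [hψi]
          simp only [hF]
          rw [harg]
        have h3 : mfun (fun k => i (v k)) = f (φB v) :=
          tendsto_nhds_unique (hmf _) h2
        simp only [ContinuousLinearMap.comp_apply]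
        rw [h1, h3]
      intro x
      exact DFunLike.congr_fun hext x
    refine ⟨g, hgnorm, hvanA, hIg, ?_⟩
    intro v
    rw [hgv]
    exact hmf v
  -- notation for the two closed subspaces
  let SB := (LinearMap.range ((ContinuousLinearMap.id ℝ TB - tB : TB →L[ℝ] TB) : TB →ₗ[ℝ] TB)).topologicalClosure
  let SA := (LinearMap.range ((ContinuousLinearMap.id ℝ TA - tA : TA →L[ℝ] TA) : TA →ₗ[ℝ] TA)).topologicalClosure
  have hSB : SB = (LinearMap.range ((ContinuousLinearMap.id ℝ TB - tB : TB →L[ℝ] TB) : TB →ₗ[ℝ] TB)).topologicalClosure := rfl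
  have hSA : SA = (LinearMap.range ((ContinuousLinearMap.id ℝ TA - tA : TA →L[ℝ] TA) : TA →ₗ[ℝ] TA)).topologicalClosure := rfl
  have hSBmem : ∀ x : TB, x - tB x ∈ SB := by
    intro x
    refine (LinearMap.range ((ContinuousLinearMap.id ℝ TB - tB : TB →L[ℝ] TB) : TB →ₗ[ℝ] TB)).le_topologicalClosure ?_
    exact ⟨x, by simp⟩
  have hSAmem : ∀ x : TA, x - tA x ∈ SA := by
    intro x
    refine (LinearMap.range ((ContinuousLinearMap.id ℝ TA - tA : TA →L[ℝ] TA) : TA →ₗ[ℝ] TA)).le_topologicalClosure ?_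
    exact ⟨x, by simp⟩
  haveI : IsClosed ((SA : Submodule ℝ TA) : Set TA) := Submodule.isClosed_topologicalClosure _
  haveI : IsClosed ((SB : Submodule ℝ TB) : Set TB) := Submodule.isClosed_topologicalClosure _
  -- the key antilipschitz estimate
  have hanti : ∀ z : TB ⧸ SB, ‖z‖ ≤ (M' + 1) * ‖Itil z‖ := by
    intro z
    obtain ⟨x, rfl⟩ := Submodule.Quotient.mk_surjective SB z
    -- dual functional on the quotient
    obtain ⟨fb, hfb1, hfbx⟩ := exists_dual_vector'' ℝ (Submodule.Quotient.mk x : TB ⧸ SB)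
    set mkB : TB →L[ℝ] TB ⧸ SB := ⟨SB.mkQ, continuous_quot_mk⟩ with hmkB
    set f : StrongDual ℝ TB := fb.comp mkB with hfdef
    have hfvan : ∀ y : TB, f (y - tB y) = 0 := by
      intro y
      have : (Submodule.Quotient.mk (y - tB y) : TB ⧸ SB) = 0 :=
        (Submodule.Quotient.mk_eq_zero _).mpr (hSBmem y)
      simp only [hfdef, ContinuousLinearMap.comp_apply]
      show fb (Submodule.Quotient.mk (y - tB y)) = 0
      rw [this, map_zero]
    have hfnorm : ‖f‖ ≤ 1 := by
      refine ContinuousLinearMap.opNorm_le_bound _ zero_le_one ?_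
      intro y
      have h1 : ‖f y‖ ≤ ‖fb‖ * ‖mkB y‖ := fb.le_opNorm _
      have h2 : ‖mkB y‖ ≤ ‖y‖ := Submodule.Quotient.norm_mk_le SB y
      calc ‖f y‖ ≤ ‖fb‖ * ‖mkB y‖ := h1
        _ ≤ 1 * ‖y‖ := mul_le_mul hfb1 h2 (norm_nonneg _) zero_le_one
        _ = 1 * ‖y‖ := rfl
    obtain ⟨g, hgnorm, hgvan, hgI, -⟩ := key f hfvan
    have hgnorm' : ‖g‖ ≤ M' + 1 := by
      calc ‖g‖ ≤ ‖f‖ * M' := hgnorm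
        _ ≤ 1 * M' := mul_le_mul_of_nonneg_right hfnorm hM'0
        _ = M' := one_mul _
        _ ≤ M' + 1 := by linarith
    -- g vanishes on SA
    have hgSA : ∀ s ∈ SA, g s = 0 := by
      have hker : SA ≤ LinearMap.ker (g : TA →ₗ[ℝ] ℝ) := by
        rw [hSA]
        refine Submodule.topologicalClosure_minimal _ ?_ ?_
        · rintro _ ⟨y, rfl⟩
          simp only [LinearMap.mem_ker]
          have := hgvan y
          simpa using this
        · exact ContinuousLinearMap.isClosed_ker g
      intro s hs
      exact hker hs
    -- main estimate
    have hval : ‖(Submodule.Quotient.mk x : TB ⧸ SB)‖ = g (I x) := by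
      rw [hgI x]
      have hfx : f x = fb (Submodule.Quotient.mk x) := rfl
      rw [hfx, hfbx]
      norm_num
    refine le_of_forall_pos_le_add ?_
    intro ε hε
    have hεpos : 0 < ε / (M' + 1) := by positivity
    obtain ⟨y, hy, hny⟩ := Submodule.Quotient.norm_mk_lt
      (Submodule.Quotient.mk (I x) : TA ⧸ SA) hεpos
    have hyx : I x - y ∈ SA := by
      have : (Submodule.Quotient.mk (I x - y) : TA ⧸ SA) = 0 := by
        rw [Submodule.Quotient.mk_sub, hy, sub_self]
      exact (Submodule.Quotient.mk_eq_zero _).mp this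
    have hgy : g (I x) = g y := by
      have := hgSA _ hyx
      have h2 : g (I x) - g y = 0 := by rw [← map_sub]; exact this
      linarith
    have hItilx : Itil (Submodule.Quotient.mk x) = Submodule.Quotient.mk (I x) := hItil x
    calc ‖(Submodule.Quotient.mk x : TB ⧸ SB)‖ = g (I x) := hval
      _ = g y := hgy
      _ ≤ |g y| := le_abs_self _
      _ ≤ ‖g‖ * ‖y‖ := g.le_opNorm y
      _ ≤ (M' + 1) * ‖y‖ := mul_le_mul_of_nonneg_right hgnorm' (norm_nonneg _)
      _ ≤ (M' + 1) * (‖(Submodule.Quotient.mk (I x) : TA ⧸ SA)‖ + ε / (M' + 1)) := by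
          refine mul_le_mul_of_nonneg_left hny.le (by linarith)
      _ = (M' + 1) * ‖(Submodule.Quotient.mk (I x) : TA ⧸ SA)‖ + ε := by
          field_simp
      _ = (M' + 1) * ‖Itil (Submodule.Quotient.mk x)‖ + ε := by rw [hItilx]
  -- continuity of Itil
  have hcont : ∀ z : TB ⧸ SB, ‖Itil z‖ ≤ (‖I‖ + 1) * ‖z‖ := by
    intro z
    refine le_of_forall_pos_le_add ?_
    intro ε hε
    have hεpos : 0 < ε / (‖I‖ + 1) := by positivity
    obtain ⟨m, hm, hnm⟩ := Submodule.Quotient.norm_mk_lt z hεpos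
    have : Itil z = Submodule.Quotient.mk (I m) := by rw [← hm, hItil]
    calc ‖Itil z‖ = ‖(Submodule.Quotient.mk (I m) : TA ⧸ SA)‖ := by rw [this]
      _ ≤ ‖I m‖ := Submodule.Quotient.norm_mk_le _ _
      _ ≤ ‖I‖ * ‖m‖ := I.le_opNorm m
      _ ≤ (‖I‖ + 1) * ‖m‖ := mul_le_mul_of_nonneg_right (by linarith) (norm_nonneg _)
      _ ≤ (‖I‖ + 1) * (‖z‖ + ε / (‖I‖ + 1)) := by
          refine mul_le_mul_of_nonneg_left hnm.le (by positivity)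
      _ = (‖I‖ + 1) * ‖z‖ + ε := by field_simp
  -- injectivity
  have hinj : Function.Injective Itil := by
    refine (injective_iff_map_eq_zero Itil).mpr ?_
    intro z hz
    have h1 := hanti z
    rw [hz] at h1
    simp only [norm_zero, mul_zero] at h1
    exact norm_le_zero_iff.mp h1
  -- closed range
  have hclosed : IsClosed (Set.range Itil) := by
    have hanti' : AntilipschitzWith (Real.toNNReal (M' + 1)) Itil := by
      refine AddMonoidHomClass.antilipschitz_of_bound Itil ?_
      intro z
      refine le_trans (hanti z) ?_
      refine mul_le_mul_of_nonneg_right ?_ (norm_nonneg _)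
      rw [Real.coe_toNNReal _ (by linarith)]
    have hlip : LipschitzWith (Real.toNNReal (‖I‖ + 1)) Itil :=
      AddMonoidHomClass.lipschitz_of_bound Itil (‖I‖ + 1) hcont
    exact hanti'.isClosed_range hlip.uniformContinuous
  refine ⟨hinj, hclosed, ?_⟩
  intro f hf
  obtain ⟨g, -, h1, h2, h3⟩ := key f hf
  exact ⟨g, h1, h2, h3⟩

end
end

section
/- Let A be a Banach algebra with a left or right bounded approximate identity. Then the Banach Bar cohomology groups HR^n(A) vanish for all n ≥ 0; i.e., the dual of the bar complex 0 → A* →^{dr_0*} (A ⊗̂ A)* → (A^⊗̂3)* → ⋯ is exact. -/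
open NormedSpace Filter

noncomputable section

/-- The k-th face of an elementary (n+2)-tensor: a₀ ⊗ ⋯ ⊗ a_k a_{k+1} ⊗ ⋯ ⊗ a_{n+1}. -/
def hochschildFace {A : Type*} [Mul A] {n : ℕ} (v : Fin (n + 2) → A) (k : Fin (n + 1)) :
    Fin (n + 1) → A := fun m =>
  if (m : ℕ) < (k : ℕ) then v m.castSucc
  else if (m : ℕ) = (k : ℕ) then v k.castSucc * v k.succ
  else v m.succ

/-- A Banach algebra has a left or right bounded approximate identity. -/
def HasBoundedApproxIdentity (A : Type*) [NormedRing A] : Prop :=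
  ∃ (ι : Type) (l : Filter ι) (e : ι → A), l.NeBot ∧
    (∃ C : ℝ, ∀ α, ‖e α‖ ≤ C) ∧
    ((∀ a : A, Tendsto (fun α => a * e α) l (nhds a)) ∨
     (∀ a : A, Tendsto (fun α => e α * a) l (nhds a)))

/-! ### Auxiliary lemmas -/

open Function Topology

section BarAux

variable {A : Type*} [Mul A]

theorem BarAux.cons_face_zero {n : ℕ} (b : A) (v : Fin (n + 1) → A) :
    hochschildFace (Fin.cons b v) 0 = Function.update v 0 (b * v 0) := by
  funext m
  unfold hochschildFace
  rcases eq_or_ne m 0 with rfl | hm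
  · simp [Fin.castSucc_zero, Fin.succ_zero_eq_one]
  · have h1 : ¬ ((m : ℕ) < ((0 : Fin (n+1)) : ℕ)) := by simp
    have h2 : (m : ℕ) ≠ ((0 : Fin (n+1)) : ℕ) := by
      exact fun h => hm (Fin.ext h)
    simp only [h1, if_neg h2, if_false]
    rw [Function.update_of_ne hm]
    cases m using Fin.cases with
    | zero => exact absurd rfl hm
    | succ i => simp

theorem BarAux.cons_face_succ {n : ℕ} (b : A) (v : Fin (n + 2) → A) (j : Fin (n + 1)) :
    hochschildFace (Fin.cons b v) j.succ = Fin.cons b (hochschildFace v j) := by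
  funext m
  unfold hochschildFace
  cases m using Fin.cases with
  | zero =>
    have : ((0 : Fin (n+2)) : ℕ) < (j.succ : ℕ) := by simp
    simp [this]
  | succ i =>
    simp only [Fin.cons_succ, Fin.val_succ]
    rcases lt_trichotomy (i : ℕ) (j : ℕ) with h | h | h
    · rw [if_pos (by omega), if_pos (by simpa using h)]
      rw [← Fin.succ_castSucc, Fin.cons_succ]
    · rw [if_neg (by omega), if_pos (by omega), if_neg (by simpa using (by omega : ¬ (i:ℕ) < j)),
        if_pos (by simpa using h)]
      rw [← Fin.succ_castSucc, Fin.cons_succ]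
    · rw [if_neg (by omega), if_neg (by omega), if_neg (by simpa using (by omega : ¬ (i:ℕ) < j)),
        if_neg (by simpa using (by omega : ¬ (i:ℕ) = j))]

theorem BarAux.snoc_face_castSucc {n : ℕ} (b : A) (v : Fin (n + 2) → A) (j : Fin (n + 1)) :
    hochschildFace (Fin.snoc v b) j.castSucc = Fin.snoc (hochschildFace v j) b := by
  funext m
  unfold hochschildFace
  cases m using Fin.lastCases with
  | last =>
    rw [if_neg (by simp), if_neg (by simp; omega)]
    rw [Fin.succ_last, Fin.snoc_last, Fin.snoc_last]
  | cast i =>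
    simp only [Fin.coe_castSucc, Fin.snoc_castSucc]
    rcases lt_trichotomy (i : ℕ) (j : ℕ) with h | h | h
    · rw [if_pos (by simpa using h), if_pos (by simpa using h)]
    · rw [if_neg (by omega), if_pos (by simpa using h), if_neg (by omega),
        if_pos (by simpa using h)]
      have hh : j.castSucc.succ = j.succ.castSucc := by
        ext; simp
      rw [hh, Fin.snoc_castSucc]
    · rw [if_neg (by omega), if_neg (by omega), if_neg (by omega), if_neg (by omega)]
      have hh : i.castSucc.succ = i.succ.castSucc := by
        ext; simp
      rw [hh, Fin.snoc_castSucc]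

theorem BarAux.snoc_face_last {n : ℕ} (b : A) (v : Fin (n + 1) → A) :
    hochschildFace (Fin.snoc v b) (Fin.last n) =
      Function.update v (Fin.last n) (v (Fin.last n) * b) := by
  funext m
  unfold hochschildFace
  rcases eq_or_ne m (Fin.last n) with rfl | hm
  · rw [if_neg (by simp), if_pos rfl, Function.update_self]
    rw [Fin.succ_last, Fin.snoc_last, Fin.snoc_castSucc]
  · have hlt : (m : ℕ) < n := by
      have h1 := m.isLt
      rcases Nat.lt_or_ge (m : ℕ) n with h | h
      · exact h
      · refine absurd (Fin.ext ?_) hm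
        simp only [Fin.val_last]
        omega
    rw [if_pos (by simpa using hlt), Function.update_of_ne hm, Fin.snoc_castSucc]

end BarAux

/-- Limits of bounded real nets along ultrafilters exist. -/
theorem BarAux.ulim_tendsto {ι : Type} (U : Ultrafilter ι) (f : ι → ℝ) (B : ℝ)
    (h : ∀ α, |f α| ≤ B) : Tendsto f (U : Filter ι) (𝓝 (limUnder (U : Filter ι) f)) := by
  apply tendsto_nhds_limUnder
  have h1 : (U.map f : Filter ℝ) ≤ 𝓟 (Set.Icc (-B) B) := by
    rw [Filter.le_principal_iff]
    have : ∀ α, f α ∈ Set.Icc (-B) B := fun α => abs_le.mp (h α)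
    exact Filter.mem_map.mpr (Filter.univ_mem' this)
  obtain ⟨a, -, ha⟩ := isCompact_Icc.ultrafilter_le_nhds (U.map f) h1
  exact ⟨a, ha⟩

/-- The abstract contracting-homotopy argument, parametrized over the side on which
the approximate identity is inserted. -/
theorem BarAux.core_vanish
    {A : Type*} [NormedRing A] [NormedAlgebra ℝ A] [CompleteSpace A]
    (T : ℕ → Type)
    [∀ n, NormedAddCommGroup (T n)] [∀ n, NormedSpace ℝ (T n)] [∀ n, CompleteSpace (T n)]
    (φ : ∀ n, ContinuousMultilinearMap ℝ (fun _ : Fin (n + 1) => A) (T n))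
    (hdense : ∀ n, (Submodule.span ℝ (Set.range ⇑(φ n))).topologicalClosure = ⊤)
    (hlift : ∀ n (m : ContinuousMultilinearMap ℝ (fun _ : Fin (n + 1) => A) ℝ),
      ∃ g : T n →L[ℝ] ℝ, ∀ v, g (φ n v) = m v)
    (dr : ∀ n, T (n + 1) →L[ℝ] T n)
    (hdr : ∀ n (v : Fin (n + 2) → A),
      dr n (φ (n + 1) v) = ∑ k : Fin (n + 1), ((-1 : ℝ) ^ (k : ℕ)) • φ n (hochschildFace v k))
    {ι : Type} (U : Ultrafilter ι) (e : ι → A) (C : ℝ) (hC : ∀ α, ‖e α‖ ≤ C)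
    (ins : ∀ n, A → (Fin (n + 1) → A) → (Fin (n + 2) → A))
    (emb : ∀ n, Fin (n + 1) → Fin (n + 2))
    (hupd : ∀ n b (v : Fin (n + 1) → A) i x,
      ins n b (Function.update v i x) = Function.update (ins n b v) (emb n i) x)
    (hins : ∀ n b (v : Fin (n + 1) → A), (∏ j, ‖ins n b v j‖) ≤ ‖b‖ * ∏ i, ‖v i‖)
    (sp : ∀ n, A → (Fin (n + 1) → A) → (Fin (n + 1) → A))
    (htend : ∀ n (v : Fin (n + 1) → A),
      Tendsto (fun α => φ n (sp n (e α) v)) (U : Filter ι) (𝓝 (φ n v)))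
    (hface0 : ∀ b (v : Fin 1 → A), hochschildFace (ins 0 b v) 0 = sp 0 b v)
    (ε : ℕ → ℝ)
    (hface : ∀ n b (v : Fin (n + 2) → A),
      ε (n + 1) • ∑ k : Fin (n + 2), ((-1 : ℝ) ^ (k : ℕ)) • φ (n + 1) (hochschildFace (ins (n + 1) b v) k)
      = φ (n + 1) (sp (n + 1) b v)
        - ε n • ∑ k : Fin (n + 1), ((-1 : ℝ) ^ (k : ℕ)) • φ (n + 1) (ins n b (hochschildFace v k))) :
    Function.Injective (fun f : StrongDual ℝ (T 0) => f.comp (dr 0)) ∧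
    (∀ n (g : StrongDual ℝ (T (n + 1))), g.comp (dr (n + 1)) = 0 →
      ∃ f : StrongDual ℝ (T n), f.comp (dr n) = g) := by
  -- extensionality on elementary tensors
  have hext : ∀ n (f₁ f₂ : StrongDual ℝ (T n)), (∀ v, f₁ (φ n v) = f₂ (φ n v)) → f₁ = f₂ := by
    intro n f₁ f₂ h
    refine ContinuousLinearMap.ext_on (s := Set.range ⇑(φ n)) ?_ ?_
    · rw [Submodule.dense_iff_topologicalClosure_eq_top]
      exact hdense n
    · rintro x ⟨v, rfl⟩; exact h v
  -- C is nonnegative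
  obtain ⟨α₀⟩ : Nonempty ι := Filter.nonempty_of_neBot (U : Filter ι)
  have hC0 : 0 ≤ C := le_trans (norm_nonneg _) (hC α₀)
  -- bound on the approximating net
  have hnet : ∀ n (g : StrongDual ℝ (T (n + 1))) (v : Fin (n + 1) → A) (α : ι),
      |g (φ (n + 1) (ins n (e α) v))| ≤ ‖g‖ * ‖φ (n + 1)‖ * C * ∏ i, ‖v i‖ := by
    intro n g v α
    have h1 : |g (φ (n + 1) (ins n (e α) v))| ≤ ‖g‖ * ‖φ (n + 1) (ins n (e α) v)‖ := by
      simpa [Real.norm_eq_abs] using g.le_opNorm (φ (n + 1) (ins n (e α) v))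
    refine h1.trans ?_
    rw [mul_assoc, mul_assoc]
    refine mul_le_mul_of_nonneg_left ?_ (norm_nonneg g)
    refine ((φ (n + 1)).le_opNorm _).trans ?_
    refine mul_le_mul_of_nonneg_left ?_ (norm_nonneg (φ (n + 1)))
    refine (hins n (e α) v).trans ?_
    exact mul_le_mul_of_nonneg_right (hC α) (Finset.prod_nonneg fun i _ => norm_nonneg _)
  -- the homotopy operator
  have hSdef : ∀ n (g : StrongDual ℝ (T (n + 1))), ∃ S : StrongDual ℝ (T n),
      ∀ v : Fin (n + 1) → A,
        S (φ n v) = limUnder (U : Filter ι) (fun α => g (φ (n + 1) (ins n (e α) v))) := by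
    intro n g
    exact hlift n (MultilinearMap.mkContinuous
      { toFun := fun v => limUnder (U : Filter ι) (fun α => g (φ (n + 1) (ins n (e α) v)))
        map_update_add' := by
          intro dec v i x y
          have hd : dec = instDecidableEqFin (n + 1) := Subsingleton.elim _ _
          subst hd
          have hpt : ∀ α, g (φ (n + 1) (ins n (e α) (Function.update v i x)))
                + g (φ (n + 1) (ins n (e α) (Function.update v i y)))
              = g (φ (n + 1) (ins n (e α) (Function.update v i (x + y)))) := by
            intro α
            rw [hupd, hupd, hupd, ContinuousMultilinearMap.map_update_add, map_add]
          have hx := BarAux.ulim_tendsto U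
            (fun α => g (φ (n + 1) (ins n (e α) (Function.update v i x))))
            _ (hnet n g (Function.update v i x))
          have hy := BarAux.ulim_tendsto U
            (fun α => g (φ (n + 1) (ins n (e α) (Function.update v i y))))
            _ (hnet n g (Function.update v i y))
          have h2 := (hx.add hy).congr hpt
          exact tendsto_nhds_unique (tendsto_nhds_limUnder ⟨_, h2⟩) h2
        map_update_smul' := by
          intro dec v i c x
          have hd : dec = instDecidableEqFin (n + 1) := Subsingleton.elim _ _
          subst hd
          have hpt : ∀ α, c * g (φ (n + 1) (ins n (e α) (Function.update v i x)))
              = g (φ (n + 1) (ins n (e α) (Function.update v i (c • x)))) := by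
            intro α
            rw [hupd, hupd, ContinuousMultilinearMap.map_update_smul, map_smul, smul_eq_mul]
          have hx := BarAux.ulim_tendsto U
            (fun α => g (φ (n + 1) (ins n (e α) (Function.update v i x))))
            _ (hnet n g (Function.update v i x))
          have h2 := (hx.const_mul c).congr hpt
          have := tendsto_nhds_unique (tendsto_nhds_limUnder ⟨_, h2⟩) h2
          simpa [smul_eq_mul] using this
        }
      (‖g‖ * ‖φ (n + 1)‖ * C)
      (by
        intro v
        have h := BarAux.ulim_tendsto U (fun α => g (φ (n + 1) (ins n (e α) v))) _ (hnet n g v)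
        show ‖limUnder (U : Filter ι) (fun α => g (φ (n + 1) (ins n (e α) v)))‖ ≤ _
        rw [Real.norm_eq_abs]
        exact le_of_tendsto h.abs (Filter.Eventually.of_forall fun α => hnet n g v α))
      )
  choose S hS using hSdef
  constructor
  · -- injectivity
    intro f₁ f₂ h
    have h' : ∀ v : Fin 2 → A, f₁ (dr 0 (φ 1 v)) = f₂ (dr 0 (φ 1 v)) := by
      intro v
      exact congrFun (congrArg (fun q : StrongDual ℝ (T 1) => ⇑q) h) (φ 1 v)
    refine hext 0 f₁ f₂ fun v => ?_
    have key : ∀ (f : StrongDual ℝ (T 0)) α, f (dr 0 (φ 1 (ins 0 (e α) v)))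
        = f (φ 0 (sp 0 (e α) v)) := by
      intro f α
      rw [hdr 0 (ins 0 (e α) v)]
      rw [show (∑ k : Fin 1, ((-1 : ℝ) ^ (k : ℕ)) • φ 0 (hochschildFace (ins 0 (e α) v) k))
          = φ 0 (hochschildFace (ins 0 (e α) v) 0) by simp]
      rw [hface0]
    have t1 : Tendsto (fun α => f₁ (φ 0 (sp 0 (e α) v))) (U : Filter ι) (𝓝 (f₁ (φ 0 v))) :=
      (f₁.continuous.tendsto _).comp (htend 0 v)
    have t2 : Tendsto (fun α => f₂ (φ 0 (sp 0 (e α) v))) (U : Filter ι) (𝓝 (f₂ (φ 0 v))) :=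
      (f₂.continuous.tendsto _).comp (htend 0 v)
    have heq : (fun α => f₁ (φ 0 (sp 0 (e α) v))) = fun α => f₂ (φ 0 (sp 0 (e α) v)) := by
      funext α
      rw [← key f₁ α, ← key f₂ α, h' (ins 0 (e α) v)]
    rw [heq] at t1
    exact tendsto_nhds_unique t1 t2
  · -- surjectivity
    intro n g hg
    refine ⟨ε n • S n g, hext (n + 1) _ _ fun v => ?_⟩
    have hzero : ∀ α, (0 : ℝ)
        = ∑ k : Fin (n + 2), ((-1 : ℝ) ^ (k : ℕ)) *
            g (φ (n + 1) (hochschildFace (ins (n + 1) (e α) v) k)) := by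
      intro α
      have h0 : g (dr (n + 1) (φ (n + 2) (ins (n + 1) (e α) v))) = 0 := by
        have := congrFun (congrArg (fun q : StrongDual ℝ (T (n + 2)) => ⇑q) hg)
          (φ (n + 2) (ins (n + 1) (e α) v))
        simpa using this
      rw [hdr (n + 1) (ins (n + 1) (e α) v)] at h0
      rw [map_sum] at h0
      simp only [map_smul, smul_eq_mul] at h0
      exact h0.symm
    have h1 : ∀ α, g (φ (n + 1) (sp (n + 1) (e α) v))
        = ε n * ∑ k : Fin (n + 1), ((-1 : ℝ) ^ (k : ℕ)) *
            g (φ (n + 1) (ins n (e α) (hochschildFace v k))) := by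
      intro α
      have := congrArg g (hface n (e α) v)
      rw [map_smul, map_sum, map_sub, map_smul, map_sum] at this
      simp only [map_smul, smul_eq_mul] at this
      rw [← hzero α] at this
      rw [mul_zero] at this
      rw [eq_comm, sub_eq_iff_eq_add] at this
      rw [this]
      simp
    have tA : Tendsto (fun α => g (φ (n + 1) (sp (n + 1) (e α) v))) (U : Filter ι)
        (𝓝 (g (φ (n + 1) v))) := (g.continuous.tendsto _).comp (htend (n + 1) v)
    have tB : Tendsto (fun α => g (φ (n + 1) (sp (n + 1) (e α) v))) (U : Filter ι)
        (𝓝 (ε n * ∑ k : Fin (n + 1), ((-1 : ℝ) ^ (k : ℕ)) *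
          S n g (φ n (hochschildFace v k)))) := by
      have hk : ∀ k : Fin (n + 1), Tendsto
          (fun α => g (φ (n + 1) (ins n (e α) (hochschildFace v k)))) (U : Filter ι)
          (𝓝 (S n g (φ n (hochschildFace v k)))) := by
        intro k
        rw [hS n g (hochschildFace v k)]
        exact BarAux.ulim_tendsto U _ _ (hnet n g (hochschildFace v k))
      have tsum : Tendsto
          (fun α => ε n * ∑ k : Fin (n + 1), ((-1 : ℝ) ^ (k : ℕ)) *
            g (φ (n + 1) (ins n (e α) (hochschildFace v k))))
          (U : Filter ι)
          (𝓝 (ε n * ∑ k : Fin (n + 1), ((-1 : ℝ) ^ (k : ℕ)) *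
            S n g (φ n (hochschildFace v k)))) := by
        apply Filter.Tendsto.const_mul
        apply tendsto_finset_sum
        intro k _
        exact (hk k).const_mul _
      refine Filter.Tendsto.congr ?_ tsum
      intro α
      rw [← h1 α]
    have hlim_eq := tendsto_nhds_unique tA tB
    show (ε n • S n g) (dr n (φ (n + 1) v)) = g (φ (n + 1) v)
    rw [hdr n v]
    rw [ContinuousLinearMap.smul_apply, map_sum]
    simp only [map_smul, smul_eq_mul]
    rw [hlim_eq]

/-- Helemskii, Theorem 16 of [He2]: If a Banach algebra A has a left or
right bounded approximate identity, then the Banach Bar cohomology groups HR^n(A)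
vanish for all n ≥ 0, i.e. the dual of the bar complex
0 → (C₀)* → (C₁)* → (C₂)* → ⋯  (C_n = A^⊗̂(n+1)) is exact. -/
theorem bar_cohomology_vanishes_of_bounded_approximate_identity
    {A : Type*} [NormedRing A] [NormedAlgebra ℝ A] [CompleteSpace A]
    (hbai : HasBoundedApproxIdentity A)
    -- the bar complex: C n = A^⊗̂(n+1)
    (T : ℕ → Type)
    [∀ n, NormedAddCommGroup (T n)] [∀ n, NormedSpace ℝ (T n)] [∀ n, CompleteSpace (T n)]
    (φ : ∀ n, ContinuousMultilinearMap ℝ (fun _ : Fin (n + 1) => A) (T n))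
    (hT : ∀ n, IsProjectiveTensorPower A (n + 1) (T n) (φ n))
    (dr : ∀ n, T (n + 1) →L[ℝ] T n)
    (hdr : ∀ n (v : Fin (n + 2) → A),
      dr n (φ (n + 1) v) = ∑ k : Fin (n + 1), ((-1 : ℝ) ^ (k : ℕ)) • φ n (hochschildFace v k)) :
    -- exactness of the dual complex: HR⁰(A) = 0 …
    Function.Injective (fun f : StrongDual ℝ (T 0) => f.comp (dr 0)) ∧
    -- … and HR^{n+1}(A) = 0
    (∀ n (g : StrongDual ℝ (T (n + 1))), g.comp (dr (n + 1)) = 0 →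
      ∃ f : StrongDual ℝ (T n), f.comp (dr n) = g) := by
  obtain ⟨ι, l, e, hne, ⟨C, hC⟩, hlr⟩ := hbai
  haveI := hne
  obtain ⟨U, hUl⟩ := Filter.exists_ultrafilter_le l
  have hlift : ∀ n (m : ContinuousMultilinearMap ℝ (fun _ : Fin (n + 1) => A) ℝ),
      ∃ g : T n →L[ℝ] ℝ, ∀ v, g (φ n v) = m v := by
    intro n m
    obtain ⟨g, hg, -⟩ := (hT n).lift ℝ m
    exact ⟨g, hg⟩
  rcases hlr with hA | hA
  · -- right bounded approximate identity: insert `e α` at the end (`Fin.snoc`)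
    refine BarAux.core_vanish T φ (fun n => (hT n).dense) hlift dr hdr U e C hC
      (fun n b v => Fin.snoc v b) (fun n => Fin.castSucc)
      (fun n b v i x => by simp only [Fin.snoc_update])
      (fun n b v => by
        rw [Fin.prod_univ_castSucc]
        simp only [Fin.snoc_castSucc, Fin.snoc_last]
        rw [mul_comm])
      (fun n b v => Function.update v (Fin.last n) (v (Fin.last n) * b))
      ?_ (fun b v => BarAux.snoc_face_last b v) (fun n => (-1 : ℝ) ^ n) ?_
    · -- htend
      intro n v
      have hv : Tendsto (fun α => Function.update v (Fin.last n) (v (Fin.last n) * e α))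
          (U : Filter ι) (𝓝 v) := by
        rw [tendsto_pi_nhds]
        intro i
        rcases eq_or_ne i (Fin.last n) with rfl | hi
        · simp only [Function.update_self]
          exact (hA (v (Fin.last n))).mono_left hUl
        · simp only [Function.update_of_ne hi]
          exact tendsto_const_nhds
      exact ((φ n).cont.tendsto v).comp hv
    · -- hface
      intro n b v
      rw [Fin.sum_univ_castSucc]
      simp only [BarAux.snoc_face_castSucc, BarAux.snoc_face_last, Fin.coe_castSucc, Fin.val_last]
      rw [smul_add, smul_smul, ← pow_add]
      have h2 : ((-1 : ℝ)) ^ ((n + 1) + (n + 1)) = 1 := Even.neg_one_pow ⟨n + 1, rfl⟩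
      rw [h2, one_smul, pow_succ, mul_comm ((-1 : ℝ) ^ n) (-1), mul_smul, neg_one_smul,
        neg_add_eq_sub]
  · -- left bounded approximate identity: insert `e α` in front (`Fin.cons`)
    refine BarAux.core_vanish T φ (fun n => (hT n).dense) hlift dr hdr U e C hC
      (fun n b v => Fin.cons b v) (fun n => Fin.succ)
      (fun n b v i x => by simp only [Fin.cons_update])
      (fun n b v => by
        rw [Fin.prod_univ_succ]
        simp only [Fin.cons_zero, Fin.cons_succ]
        exact le_refl _)
      (fun n b v => Function.update v 0 (b * v 0))
      ?_ (fun b v => BarAux.cons_face_zero b v) (fun n => (1 : ℝ)) ?_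
    · -- htend
      intro n v
      have hv : Tendsto (fun α => Function.update v 0 (e α * v 0))
          (U : Filter ι) (𝓝 v) := by
        rw [tendsto_pi_nhds]
        intro i
        rcases eq_or_ne i 0 with rfl | hi
        · simp only [Function.update_self]
          exact (hA (v 0)).mono_left hUl
        · simp only [Function.update_of_ne hi]
          exact tendsto_const_nhds
      exact ((φ n).cont.tendsto v).comp hv
    · -- hface
      intro n b v
      rw [one_smul, one_smul, Fin.sum_univ_succ]
      simp only [BarAux.cons_face_succ, BarAux.cons_face_zero, Fin.val_succ, Fin.val_zero,
        pow_zero, one_smul]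
      rw [sub_eq_add_neg]
      congr 1
      rw [← Finset.sum_neg_distrib]
      refine Finset.sum_congr rfl fun j _ => ?_
      rw [pow_succ, mul_comm, mul_smul, neg_one_smul]

end
end
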